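/- For a prime ℓ ≥ 5, the number of pairs (A,B) ∈ (Z/ℓ²Z)² with 4A³ + 27B² ≠ 0 equals ℓ⁴ − 2ℓ² + ℓ. -/
import Mathlib

/-- For a prime `ℓ ≥ 5`, the number of pairs `(A,B) ∈ (ℤ/ℓ²ℤ)²` with `4A³ + 27B² ≠ 0`
equals `ℓ⁴ − 2ℓ² + ℓ`. -/
theorem stmt_4 (ℓ : ℕ) (hℓ : ℓ.Prime) (h5 : 5 ≤ ℓ) :
    Nat.card {x : ZMod (ℓ ^ 2) × ZMod (ℓ ^ 2) // 4 * x.1 ^ 3 + 27 * x.2 ^ 2 ≠ 0} =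
      ℓ ^ 4 - 2 * ℓ ^ 2 + ℓ := by
  classical
  haveI : Fact ℓ.Prime := ⟨hℓ⟩
  haveI : NeZero ℓ := ⟨hℓ.pos.ne'⟩
  have hlt2 : ℓ < ℓ ^ 2 := by nlinarith
  haveI : Fact (1 < ℓ ^ 2) := ⟨by nlinarith⟩
  haveI : NeZero (ℓ ^ 2) := ⟨by positivity⟩
  -- units 2, 3, 4, 27
  have h2 : IsUnit (2 : ZMod (ℓ ^ 2)) := by
    have hc : Nat.Coprime 2 (ℓ ^ 2) :=
      Nat.Coprime.pow_right 2 (((Nat.coprime_primes Nat.prime_two hℓ).mpr (by omega)))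
    have := (ZMod.isUnit_iff_coprime 2 (ℓ ^ 2)).mpr hc
    simpa using this
  have h3 : IsUnit (3 : ZMod (ℓ ^ 2)) := by
    have hc : Nat.Coprime 3 (ℓ ^ 2) :=
      Nat.Coprime.pow_right 2 (((Nat.coprime_primes Nat.prime_three hℓ).mpr (by omega)))
    have := (ZMod.isUnit_iff_coprime 3 (ℓ ^ 2)).mpr hc
    simpa using this
  have h4 : IsUnit (4 : ZMod (ℓ ^ 2)) := by
    have := h2.mul h2; norm_num at this; exact this
  have h27 : IsUnit (27 : ZMod (ℓ ^ 2)) := by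
    have := h3.pow 3; norm_num at this; exact this
  have hker : (ℓ : ZMod (ℓ ^ 2)) ^ 2 = 0 := by
    rw [← Nat.cast_pow]; exact ZMod.natCast_self _
  -- divisibility by ℓ
  have hdvd : ∀ x : ZMod (ℓ ^ 2), (ℓ : ZMod (ℓ ^ 2)) ∣ x ↔ ℓ ∣ x.val := by
    intro x
    constructor
    · rintro ⟨y, rfl⟩
      rw [ZMod.val_mul, ZMod.val_cast_of_lt hlt2]
      exact (Nat.dvd_mod_iff (dvd_pow_self ℓ two_ne_zero)).mpr ⟨y.val, rfl⟩
    · rintro ⟨m, hm⟩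
      refine ⟨(m : ZMod (ℓ ^ 2)), ?_⟩
      rw [← ZMod.natCast_zmod_val x, hm]
      push_cast; ring
  have hsq : ∀ x : ZMod (ℓ ^ 2), x ^ 2 = 0 → (ℓ : ZMod (ℓ ^ 2)) ∣ x := by
    intro x hx
    rw [hdvd]
    have h0 : ((x.val ^ 2 : ℕ) : ZMod (ℓ ^ 2)) = 0 := by
      push_cast [ZMod.natCast_zmod_val]; exact hx
    have hd : ℓ ^ 2 ∣ x.val ^ 2 := (ZMod.natCast_eq_zero_iff _ _).mp h0
    exact hℓ.dvd_of_dvd_pow ((dvd_pow_self ℓ two_ne_zero).trans hd)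
  have hunit : ∀ x : ZMod (ℓ ^ 2), ¬ IsUnit x ↔ (ℓ : ZMod (ℓ ^ 2)) ∣ x := by
    intro x
    rw [hdvd]
    have h : IsUnit x ↔ ¬ ℓ ∣ x.val := by
      conv_lhs => rw [← ZMod.natCast_zmod_val x]
      rw [ZMod.isUnit_iff_coprime, Nat.coprime_pow_right_iff (by norm_num),
        Nat.coprime_comm, hℓ.coprime_iff_not_dvd]
    rw [h]; tauto
  -- the zero set
  have hzero : Nat.card {x : ZMod (ℓ ^ 2) × ZMod (ℓ ^ 2) // 4 * x.1 ^ 3 + 27 * x.2 ^ 2 = 0}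
      = ℓ * (ℓ - 1) + ℓ * ℓ := by
    let F : (ZMod (ℓ ^ 2))ˣ ⊕ (ZMod ℓ × ZMod ℓ) →
        {x : ZMod (ℓ ^ 2) × ZMod (ℓ ^ 2) // 4 * x.1 ^ 3 + 27 * x.2 ^ 2 = 0} :=
      Sum.elim
        (fun t => ⟨(-3 * (t : ZMod (ℓ ^ 2)) ^ 2, 2 * (t : ZMod (ℓ ^ 2)) ^ 3), by
          show 4 * (-3 * (t : ZMod (ℓ ^ 2)) ^ 2) ^ 3 + 27 * (2 * (t : ZMod (ℓ ^ 2)) ^ 3) ^ 2 = 0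
          ring⟩)
        (fun p => ⟨((ℓ : ZMod (ℓ ^ 2)) * (p.1.val : ZMod (ℓ ^ 2)),
                    (ℓ : ZMod (ℓ ^ 2)) * (p.2.val : ZMod (ℓ ^ 2))), by
          show 4 * ((ℓ : ZMod (ℓ ^ 2)) * _) ^ 3 + 27 * ((ℓ : ZMod (ℓ ^ 2)) * _) ^ 2 = 0
          have e : ∀ u v : ZMod (ℓ ^ 2),
              4 * ((ℓ : ZMod (ℓ ^ 2)) * u) ^ 3 + 27 * ((ℓ : ZMod (ℓ ^ 2)) * v) ^ 2 =
              (ℓ : ZMod (ℓ ^ 2)) ^ 2 * (4 * (ℓ : ZMod (ℓ ^ 2)) * u ^ 3 + 27 * v ^ 2) := by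
            intros; ring
          rw [e, hker, zero_mul]⟩)
    have hinj : Function.Injective F := by
      rintro (t | ⟨a, b⟩) (s | ⟨c, d⟩) h
      · -- unit vs unit
        simp only [F, Sum.elim_inl, Subtype.mk.injEq, Prod.mk.injEq] at h
        obtain ⟨h1, h2'⟩ := h
        have ht2 : (t : ZMod (ℓ ^ 2)) ^ 2 = (s : ZMod (ℓ ^ 2)) ^ 2 :=
          h3.mul_left_cancel (by linear_combination -h1)
        have ht3 : (t : ZMod (ℓ ^ 2)) ^ 3 = (s : ZMod (ℓ ^ 2)) ^ 3 :=
          h2.mul_left_cancel h2'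
        have ht2' : t ^ 2 = s ^ 2 := Units.ext (by push_cast; exact ht2)
        have ht3' : t ^ 3 = s ^ 3 := Units.ext (by push_cast; exact ht3)
        have : t ^ 3 * (t ^ 2)⁻¹ = s ^ 3 * (s ^ 2)⁻¹ := by rw [ht2', ht3']
        have ht : t = t ^ 3 * (t ^ 2)⁻¹ := by group
        have hs : s = s ^ 3 * (s ^ 2)⁻¹ := by group
        rw [Sum.inl.injEq]
        rw [ht, hs, this]
      · -- unit vs non-unit : contradiction
        exfalso
        simp only [F, Sum.elim_inl, Sum.elim_inr, Subtype.mk.injEq, Prod.mk.injEq] at h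
        obtain ⟨h1, -⟩ := h
        have hu : IsUnit (-3 * (t : ZMod (ℓ ^ 2)) ^ 2) := (h3.neg).mul ((t.isUnit).pow 2)
        rw [h1] at hu
        exact ((hunit _).mpr ⟨_, rfl⟩) hu
      · exfalso
        simp only [F, Sum.elim_inl, Sum.elim_inr, Subtype.mk.injEq, Prod.mk.injEq] at h
        obtain ⟨h1, -⟩ := h
        have hu : IsUnit (-3 * (s : ZMod (ℓ ^ 2)) ^ 2) := (h3.neg).mul ((s.isUnit).pow 2)
        rw [← h1] at hu
        exact ((hunit _).mpr ⟨_, rfl⟩) hu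
      · -- non-unit vs non-unit
        simp only [F, Sum.elim_inr, Subtype.mk.injEq, Prod.mk.injEq] at h
        obtain ⟨h1, h2'⟩ := h
        have key : ∀ u v : ZMod ℓ,
            (ℓ : ZMod (ℓ ^ 2)) * (u.val : ZMod (ℓ ^ 2)) = (ℓ : ZMod (ℓ ^ 2)) * (v.val : ZMod (ℓ ^ 2)) → u = v := by
          intro u v huv
          have e : ∀ w : ZMod ℓ, ((ℓ * w.val : ℕ) : ZMod (ℓ ^ 2)) =
              (ℓ : ZMod (ℓ ^ 2)) * (w.val : ZMod (ℓ ^ 2)) := by intro w; push_cast; ring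
          have hval : ∀ w : ZMod ℓ, ((ℓ * w.val : ℕ) : ZMod (ℓ ^ 2)).val = ℓ * w.val := by
            intro w
            exact ZMod.val_cast_of_lt (by nlinarith [w.val_lt, hℓ.pos])
          have : ℓ * u.val = ℓ * v.val := by
            rw [← hval u, ← hval v, e, e, huv]
          have : u.val = v.val := Nat.eq_of_mul_eq_mul_left hℓ.pos this
          exact ZMod.val_injective ℓ this
        rw [Sum.inr.injEq, Prod.mk.injEq]
        exact ⟨key _ _ h1, key _ _ h2'⟩
    have hsurj : Function.Surjective F := by
      rintro ⟨⟨A, B⟩, hAB⟩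
      simp only at hAB
      by_cases hA : IsUnit A
      · -- B is a unit too
        have hB : IsUnit B := by
          by_contra hB
          obtain ⟨b, hb⟩ := (hunit B).mp hB
          have hB2 : B ^ 2 = 0 := by
            rw [hb]
            calc ((ℓ : ZMod (ℓ ^ 2)) * b) ^ 2 = (ℓ : ZMod (ℓ ^ 2)) ^ 2 * b ^ 2 := by ring
              _ = 0 := by rw [hker, zero_mul]
          have hA3 : A ^ 3 = 0 := h4.mul_left_cancel (by
            rw [mul_zero]
            linear_combination hAB - 27 * ((sq B) ▸ hB2 : B * B = 0) * 1)
          exact (hA.pow 3).ne_zero hA3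
        obtain ⟨uA, huA⟩ := hA
        obtain ⟨uB, huB⟩ := hB
        obtain ⟨u2, hu2⟩ := id h2
        obtain ⟨u3, hu3⟩ := id h3
        refine ⟨Sum.inl (-(u3 * uB) * (u2 * uA)⁻¹), ?_⟩
        set t : (ZMod (ℓ ^ 2))ˣ := -(u3 * uB) * (u2 * uA)⁻¹ with hts
        have key : (2 * A) * (t : ZMod (ℓ ^ 2)) = -(3 * B) := by
          have h1 : (t : ZMod (ℓ ^ 2)) = -(3 * B) * ((u2 * uA)⁻¹ : (ZMod (ℓ ^ 2))ˣ) := by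
            rw [hts]
            push_cast [hu3, huB]
            ring
          rw [h1, ← hu2, ← huA]
          calc (↑u2 * ↑uA) * (-((3:ZMod (ℓ^2)) * B) * ↑(u2 * uA)⁻¹)
              = -((3:ZMod (ℓ^2)) * B) * (↑(u2 * uA) * ↑(u2 * uA)⁻¹) := by push_cast; ring
            _ = -((3:ZMod (ℓ^2)) * B) := by rw [Units.mul_inv, mul_one]
        have hA' : -3 * (t : ZMod (ℓ ^ 2)) ^ 2 = A := by
          apply (h4.mul (IsUnit.pow 2 ⟨uA, huA⟩)).mul_left_cancel
          calc (4 * A ^ 2) * (-3 * (t : ZMod (ℓ ^ 2)) ^ 2)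
              = -3 * ((2 * A) * (t : ZMod (ℓ ^ 2))) ^ 2 := by ring
            _ = -3 * (-(3 * B)) ^ 2 := by rw [key]
            _ = (4 * A ^ 2) * A := by linear_combination -hAB
        have hB' : 2 * (t : ZMod (ℓ ^ 2)) ^ 3 = B := by
          apply ((h4.mul h2).mul (IsUnit.pow 3 ⟨uA, huA⟩)).mul_left_cancel
          calc (4 * 2 * A ^ 3) * (2 * (t : ZMod (ℓ ^ 2)) ^ 3)
              = 2 * ((2 * A) * (t : ZMod (ℓ ^ 2))) ^ 3 := by ring
            _ = 2 * (-(3 * B)) ^ 3 := by rw [key]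
            _ = (4 * 2 * A ^ 3) * B := by linear_combination (-2 * B) * hAB
        exact Subtype.ext (Prod.ext hA' hB')
      · -- both coordinates divisible by ℓ
        obtain ⟨a, ha⟩ := (hdvd A).mp ((hunit A).mp hA)
        have hA3 : 4 * A ^ 3 = 0 := by
          have : A ^ 2 = 0 := by
            obtain ⟨a', ha'⟩ := (hunit A).mp hA
            rw [ha']
            calc ((ℓ : ZMod (ℓ ^ 2)) * a') ^ 2 = (ℓ : ZMod (ℓ ^ 2)) ^ 2 * a' ^ 2 := by ring
              _ = 0 := by rw [hker, zero_mul]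
          calc 4 * A ^ 3 = 4 * A * A ^ 2 := by ring
            _ = 0 := by rw [this, mul_zero]
        have hB2 : B ^ 2 = 0 := h27.mul_left_cancel (by
          rw [mul_zero]; linear_combination hAB - hA3)
        obtain ⟨bn, hbn⟩ := (hdvd B).mp (hsq B hB2)
        obtain ⟨an, han⟩ := (hdvd A).mp ((hunit A).mp hA)
        have haln : an < ℓ := by
          have := A.val_lt
          rw [han] at this
          by_contra hcc
          push_neg at hcc
          have : ℓ * ℓ ≤ ℓ * an := Nat.mul_le_mul_left ℓ hcc
          nlinarith [A.val_lt, han]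
        have hbln : bn < ℓ := by
          by_contra hcc
          push_neg at hcc
          have : ℓ * ℓ ≤ ℓ * bn := Nat.mul_le_mul_left ℓ hcc
          nlinarith [B.val_lt, hbn]
        refine ⟨Sum.inr ((an : ZMod ℓ), (bn : ZMod ℓ)), ?_⟩
        apply Subtype.ext
        apply Prod.ext
        · show (ℓ : ZMod (ℓ ^ 2)) * (((an : ZMod ℓ).val : ℕ) : ZMod (ℓ ^ 2)) = A
          rw [ZMod.val_cast_of_lt haln, ← ZMod.natCast_zmod_val A, han]
          push_cast; ring
        · show (ℓ : ZMod (ℓ ^ 2)) * (((bn : ZMod ℓ).val : ℕ) : ZMod (ℓ ^ 2)) = B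
          rw [ZMod.val_cast_of_lt hbln, ← ZMod.natCast_zmod_val B, hbn]
          push_cast; ring
    rw [← Nat.card_eq_of_bijective F ⟨hinj, hsurj⟩]
    rw [Nat.card_sum, Nat.card_prod]
    simp only [Nat.card_eq_fintype_card]
    rw [ZMod.card_units_eq_totient, ZMod.card,
      Nat.totient_prime_pow hℓ (by norm_num)]
    norm_num
  -- complement count
  have htot : Nat.card {x : ZMod (ℓ ^ 2) × ZMod (ℓ ^ 2) // 4 * x.1 ^ 3 + 27 * x.2 ^ 2 ≠ 0}
      = ℓ ^ 2 * ℓ ^ 2 - (ℓ * (ℓ - 1) + ℓ * ℓ) := by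
    rw [Nat.card_eq_fintype_card]
    rw [Fintype.card_subtype_compl]
    rw [← hzero, Nat.card_eq_fintype_card]
    congr 1
    rw [Fintype.card_prod, ZMod.card]
  rw [htot]
  have h1 : ℓ * (ℓ - 1) + ℓ = ℓ ^ 2 := by
    obtain ⟨m, rfl⟩ : ∃ m, ℓ = m + 1 := ⟨ℓ - 1, by omega⟩
    simp only [Nat.add_sub_cancel]
    ring
  have h2' : ℓ ^ 2 * ℓ ^ 2 = ℓ ^ 4 := by ring
  have h3' : 2 * ℓ ^ 2 ≤ ℓ ^ 4 := by nlinarith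
  have h4' : ℓ * ℓ = ℓ ^ 2 := by ring
  rw [h2', h4']
  omega
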